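/- Let n≥1, let F be a family of open balls in ℝ^{n+1} and let L>1. Define P_k=∪{LB : B∈F, diam B<1/k} for k≥1, H=∪{B : B∈F}, and P=(∩_{k≥1}P_k)∖H. Then P is porous with porosity constant 1/L: for every x∈P and every δ>0 there exists y∈ℝ^{n+1} with 0<‖y−x‖<δ such that B(y,(1/L)‖y−x‖)∩P=∅. -/
import Mathlib


open Set Metric MeasureTheory

noncomputable section

abbrev Euc (m : ℕ) : Type := EuclideanSpace ℝ (Fin m)

/-- `P_k`: the union of the `L`-enlargements of those balls of the family `F`
(given by centre-radius pairs) of diameter less than `1/k`. -/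
def holesPk (m : ℕ) (F : Set (Euc m × ℝ)) (L : ℝ) (k : ℕ) : Set (Euc m) :=
  ⋃ p ∈ {q ∈ F | 2 * q.2 < 1 / (k : ℝ)}, Metric.ball p.1 (L * p.2)

/-- `H`: the union of all the balls (holes) of the family `F`. -/
def holesH (m : ℕ) (F : Set (Euc m × ℝ)) : Set (Euc m) :=
  ⋃ p ∈ F, Metric.ball p.1 p.2

/-- `P = (⋂_{k ≥ 1} P_k) \ H`. -/
def holesP (m : ℕ) (F : Set (Euc m × ℝ)) (L : ℝ) : Set (Euc m) :=
  (⋂ k ∈ {j : ℕ | 1 ≤ j}, holesPk m F L k) \ holesH m F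

/-- The set `P = (⋂_{k ≥ 1} P_k) \ H` built from a family `F` of open balls
and an enlargement factor `L > 1` is porous with porosity constant `1/L`. -/
theorem holesP_porous_with_constant (n : ℕ) (hn : 1 ≤ n)
    (F : Set (Euc (n + 1) × ℝ)) (hF : ∀ p ∈ F, 0 < p.2) (L : ℝ) (hL : 1 < L) :
    ∀ x ∈ holesP (n + 1) F L, ∀ δ : ℝ, 0 < δ → ∃ y : Euc (n + 1), y ≠ x ∧ ‖y - x‖ < δ ∧
      Metric.ball y ((1 / L) * ‖y - x‖) ∩ holesP (n + 1) F L = ∅ := by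
  intro x hx δ hδ
  obtain ⟨hxk, hxH⟩ := hx
  have hL0 : 0 < L := lt_trans one_pos hL
  -- choose k with 1 ≤ k and L / (2 * k) ≤ δ
  obtain ⟨k, hk⟩ := exists_nat_gt (L / (2 * δ))
  have hk1 : 1 ≤ k + 1 := Nat.le_add_left 1 k
  have hxPk : x ∈ holesPk (n + 1) F L (k + 1) := by
    have := mem_iInter₂.1 hxk (k + 1) hk1
    exact this
  rw [holesPk, mem_iUnion₂] at hxPk
  obtain ⟨p, ⟨hpF, hpd⟩, hxball⟩ := hxPk
  obtain ⟨c, r⟩ := p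
  simp only at hpd hxball
  have hr : 0 < r := hF _ hpF
  have hxc : r ≤ dist x c := by
    by_contra h
    push_neg at h
    exact hxH (mem_iUnion₂.2 ⟨(c, r), hpF, mem_ball.2 h⟩)
  have hdist : dist x c < L * r := mem_ball.1 hxball
  refine ⟨c, ?_, ?_, ?_⟩
  · intro h
    rw [h] at hxc
    simp at hxc
    linarith
  · have h1 : ‖c - x‖ = dist x c := by
      rw [dist_comm, dist_eq_norm]
    rw [h1]
    have hkpos : (0 : ℝ) < k + 1 := by positivity
    have h2 : 2 * r < 1 / ((k : ℝ) + 1) := by exact_mod_cast hpd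
    have h3 : L / (2 * δ) < (k : ℝ) + 1 := lt_trans hk (by linarith)
    -- dist x c < L * r < L / (2*(k+1)) ≤ δ
    have : L * r < L * (1 / (2 * ((k : ℝ) + 1))) := by
      apply mul_lt_mul_of_pos_left _ hL0
      rw [one_div, inv_eq_one_div, lt_div_iff₀ (by positivity)]
      rw [lt_div_iff₀ hkpos] at h2
      nlinarith
    have h4 : L * (1 / (2 * ((k : ℝ) + 1))) ≤ δ := by
      rw [mul_one_div, div_le_iff₀ (by positivity)]
      rw [div_lt_iff₀ (by positivity)] at h3
      nlinarith
    linarith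
  · ext z
    simp only [mem_inter_iff, mem_empty_iff_false, iff_false, not_and]
    intro hz hzP
    have h1 : ‖c - x‖ = dist x c := by rw [dist_comm, dist_eq_norm]
    have hz' : dist z c < (1 / L) * dist x c := by
      rw [← h1]; exact mem_ball.1 hz
    have hzr : dist z c < r := by
      have : (1 / L) * dist x c < r := by
        rw [one_div, inv_mul_lt_iff₀ hL0]
        linarith
      linarith
    exact hzP.2 (mem_iUnion₂.2 ⟨(c, r), hpF, mem_ball.2 hzr⟩)

end
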